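/- Let N(z) = (z² + 1)/(2z) be the Newton map of f(z) = z² − 1 and let L = {iy : y ∈ ℝ} ⊂ ℂ be the imaginary axis. Then there exists a point z ∈ L, z ≠ 0, such that all forward iterates N^k(z), k ≥ 0, are defined and nonzero, and the forward orbit {N^k(z) : k ≥ 0} is dense in L. -/

import Mathlib

open MeasureTheory Topology Filter Set Real

theorem my_exists_dense_orbit {α : Type*} [MeasurableSpace α] [TopologicalSpace α]
    [SecondCountableTopology α] [OpensMeasurableSpace α] [Nonempty α]
    {f : α → α} {μ : Measure α} [IsFiniteMeasure μ] [μ.IsOpenPosMeasure]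
    (hf : Ergodic f μ) :
    ∃ x : α, ∀ U : Set α, IsOpen U → U.Nonempty → ∃ k, f^[k] x ∈ U := by
  set B := TopologicalSpace.countableBasis α with hB
  have hBbasis := TopologicalSpace.isBasis_countableBasis α
  have hBcount : B.Countable := TopologicalSpace.countable_countableBasis α
  set A : Set α → Set α := fun U => ⋃ n, f^[n] ⁻¹' U with hA
  have hAmeas : ∀ U : Set α, IsOpen U → MeasurableSet (A U) := fun U hU =>
    MeasurableSet.iUnion fun n => (hU.measurableSet).preimage (hf.measurable.iterate n)
  have hAfull : ∀ U : Set α, IsOpen U → U.Nonempty → A U =ᵐ[μ] (univ : Set α) := by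
    intro U hU hUne
    have hsub : f ⁻¹' A U ⊆ A U := by
      rw [hA]
      simp only [preimage_iUnion]
      refine iUnion_subset fun n => ?_
      have : f ⁻¹' (f^[n] ⁻¹' U) = f^[n+1] ⁻¹' U := by
        rw [Function.iterate_succ, preimage_comp]
      rw [this]
      exact subset_iUnion (fun n => f^[n] ⁻¹' U) (n+1)
    rcases hf.ae_empty_or_univ_of_preimage_ae_le (hAmeas U hU).nullMeasurableSet
        hsub.eventuallyLE with h | h
    · exfalso
      have h0 : μ (A U) = 0 := ae_eq_empty.mp h
      have hUsub : U ⊆ A U := by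
        intro x hx; exact mem_iUnion.mpr ⟨0, hx⟩
      have := hU.measure_pos μ hUne
      exact absurd (measure_mono_null hUsub h0) this.ne'
    · exact h
  set 𝒰 : Set (Set α) := {U | U ∈ B ∧ U.Nonempty} with h𝒰
  have h𝒰count : 𝒰.Countable := hBcount.mono fun U hU => hU.1
  set G : Set α := ⋂ U ∈ 𝒰, A U with hG
  have hGfull : μ Gᶜ = 0 := by
    rw [hG, compl_iInter₂]
    refine (measure_biUnion_null_iff h𝒰count).mpr fun U hU => ?_
    have := hAfull U (TopologicalSpace.isOpen_of_mem_countableBasis hU.1) hU.2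
    rwa [ae_eq_univ] at this
  have hGne : G.Nonempty := by
    refine nonempty_of_measure_ne_zero (μ := μ) ?_
    have huniv : μ univ ≠ 0 := (isOpen_univ.measure_pos μ univ_nonempty).ne'
    intro h0
    have : μ univ ≤ μ G + μ Gᶜ := by
      have := measure_union_le (μ := μ) G Gᶜ
      simpa using this
    rw [h0, hGfull] at this
    simp only [add_zero, nonpos_iff_eq_zero] at this
    exact huniv this
  obtain ⟨x, hx⟩ := hGne
  refine ⟨x, fun U hU hUne => ?_⟩
  obtain ⟨u, hu⟩ := hUne
  obtain ⟨V, hVB, huV, hVU⟩ := hBbasis.exists_subset_of_mem_open hu hU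
  have hxA : x ∈ A V := by
    rw [hG] at hx
    exact mem_iInter₂.mp hx V ⟨hVB, ⟨u, huV⟩⟩
  obtain ⟨n, hn⟩ := mem_iUnion.mp hxA
  exact ⟨n, hVU hn⟩

noncomputable def myCot (s : ℝ) : ℝ := Real.cos (π * s) / Real.sin (π * s)

lemma myCot_periodic : Function.Periodic myCot 1 := by
  intro s
  unfold myCot
  rw [mul_add, mul_one, Real.cos_add_pi, Real.sin_add_pi, neg_div_neg_eq]

lemma myCot_double {t : ℝ} (h1 : Real.sin (π * t) ≠ 0) (h2 : Real.cos (π * t) ≠ 0) :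
    myCot (2 * t) = (myCot t ^ 2 - 1) / (2 * myCot t) := by
  unfold myCot
  have : π * (2 * t) = 2 * (π * t) := by ring
  rw [this, Real.sin_two_mul, Real.cos_two_mul']
  field_simp

lemma newton_I_mul (N : ℂ → ℂ) (hN : ∀ z, N z = (z ^ 2 + 1) / (2 * z)) (y : ℝ) (hy : y ≠ 0) :
    N (Complex.I * y) = Complex.I * (((y ^ 2 - 1) / (2 * y) : ℝ) : ℂ) := by
  rw [hN]
  have hy' : (y : ℂ) ≠ 0 := Complex.ofReal_ne_zero.mpr hy
  push_cast
  field_simp [Complex.I_ne_zero]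
  ring_nf
  simp [Complex.I_sq]

/-- **Chaotic behaviour of the Newton map of `z² - 1` on the imaginary axis: a dense
orbit.** For `N(z) = (z² + 1)/(2z)` and `L` the imaginary axis, there is a nonzero point
`z ∈ L` all of whose forward iterates are defined (nonzero) and whose forward orbit
`{N^k(z) : k ≥ 0}` is dense in `L`. -/
theorem newton_map_imaginary_axis_dense_orbit
    (N : ℂ → ℂ) (hN : ∀ z, N z = (z ^ 2 + 1) / (2 * z))
    (L : Set ℂ) (hL : L = {z : ℂ | z.re = 0}) :
    ∃ z ∈ L, z ≠ 0 ∧ (∀ k : ℕ, N^[k] z ≠ 0) ∧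
      ∀ w ∈ L, w ∈ closure {x : ℂ | ∃ k : ℕ, x = N^[k] z} := by
  haveI : Fact ((0:ℝ) < 1) := ⟨one_pos⟩
  haveI hinfU : Infinite (AddCircle (1:ℝ)) := by
    have hinf : (Set.Ico (0:ℝ) (0+1)).Infinite := Set.Ico_infinite (by norm_num)
    haveI := hinf.to_subtype
    exact Infinite.of_surjective (AddCircle.equivIco (1:ℝ) 0) (AddCircle.equivIco (1:ℝ) 0).surjective
  set f : AddCircle (1:ℝ) → AddCircle (1:ℝ) := fun y => (2:ℕ) • y with hf
  have herg : Ergodic f volume := AddCircle.ergodic_nsmul (by norm_num)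
  obtain ⟨x, hx⟩ := my_exists_dense_orbit herg
  have hiter : ∀ k : ℕ, f^[k] x = (2 ^ k : ℕ) • x := by
    intro k
    induction k with
    | zero => simp
    | succ k ih =>
      rw [Function.iterate_succ_apply', ih]
      show (2:ℕ) • (2 ^ k : ℕ) • x = (2 ^ (k+1) : ℕ) • x
      rw [smul_smul, ← pow_succ']
  obtain ⟨t₀, ht₀⟩ : ∃ t₀ : ℝ, (t₀ : AddCircle (1:ℝ)) = x := QuotientAddGroup.mk_surjective x
  have hθ : ∀ k : ℕ, ((2 ^ k * t₀ : ℝ) : AddCircle (1:ℝ)) = f^[k] x := by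
    intro k
    rw [hiter k, ← ht₀]
    have h2 : (2 ^ k * t₀ : ℝ) = (2 ^ k : ℕ) • t₀ := by push_cast; ring
    rw [h2, AddCircle.coe_nsmul]
  have hzero : ∀ j : ℕ, f^[j] (0 : AddCircle (1:ℝ)) = 0 := by
    intro j
    induction j with
    | zero => rfl
    | succ j ih =>
      rw [Function.iterate_succ_apply', ih]
      show (2:ℕ) • (0 : AddCircle (1:ℝ)) = 0
      simp
  have hne : ∀ k : ℕ, f^[k] x ≠ 0 := by
    intro k hk
    have hstay : ∀ m : ℕ, k ≤ m → f^[m] x = 0 := by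
      intro m hm
      obtain ⟨j, rfl⟩ := Nat.exists_eq_add_of_le hm
      rw [add_comm, Function.iterate_add_apply, hk, hzero]
    set F : Set (AddCircle (1:ℝ)) := (fun j => f^[j] x) '' (Set.Iic k) with hF
    have hFfin : F.Finite := (Set.finite_Iic k).image _
    have horb : ∀ m : ℕ, f^[m] x ∈ F := by
      intro m
      rcases le_or_gt m k with h | h
      · exact ⟨m, h, rfl⟩
      · rw [hstay m h.le, ← hk]; exact ⟨k, le_refl k, rfl⟩
    have hFne : Fᶜ.Nonempty := hFfin.infinite_compl.nonempty
    obtain ⟨m, hm⟩ := hx Fᶜ hFfin.isClosed.isOpen_compl hFne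
    exact hm (horb m)
  have hsin : ∀ k : ℕ, Real.sin (π * (2 ^ k * t₀)) ≠ 0 := by
    intro k hs
    obtain ⟨n, hn⟩ := Real.sin_eq_zero_iff.mp hs
    apply hne k
    rw [← hθ k, AddCircle.coe_eq_zero_iff]
    refine ⟨n, ?_⟩
    have hπ : (π : ℝ) ≠ 0 := Real.pi_ne_zero
    have hn2 : (n : ℝ) = 2 ^ k * t₀ := by
      have hn' : (n : ℝ) * π = (2 ^ k * t₀) * π := by rw [hn]; ring
      exact mul_right_cancel₀ hπ hn'
    rw [zsmul_eq_mul, mul_one]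
    exact hn2
  have hcos : ∀ k : ℕ, Real.cos (π * (2 ^ k * t₀)) ≠ 0 := by
    intro k hc
    apply hsin (k + 1)
    have h2 : π * (2 ^ (k+1) * t₀) = 2 * (π * (2 ^ k * t₀)) := by ring
    rw [h2, Real.sin_two_mul, hc, mul_zero]
  have hy_ne : ∀ k : ℕ, myCot (2 ^ k * t₀) ≠ 0 :=
    fun k => div_ne_zero (hcos k) (hsin k)
  set z : ℂ := Complex.I * (myCot t₀ : ℝ) with hz
  have hiterN : ∀ k : ℕ, N^[k] z = Complex.I * ((myCot (2 ^ k * t₀) : ℝ) : ℂ) := by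
    intro k
    induction k with
    | zero => simp [hz]
    | succ k ih =>
      rw [Function.iterate_succ_apply', ih,
        newton_I_mul N hN _ (hy_ne k), ← myCot_double (hsin k) (hcos k)]
      have h2 : 2 * (2 ^ k * t₀) = 2 ^ (k+1) * t₀ := by ring
      rw [h2]
  have hNne : ∀ k : ℕ, N^[k] z ≠ 0 := by
    intro k
    rw [hiterN k]
    exact mul_ne_zero Complex.I_ne_zero (Complex.ofReal_ne_zero.mpr (hy_ne k))
  refine ⟨z, ?_, ?_, hNne, ?_⟩
  · rw [hL]; simp [hz, Complex.mul_re]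
  · simpa using hNne 0
  intro w hw
  have hw' : w.re = 0 := by rw [hL] at hw; exact hw
  have hwI : w = Complex.I * (w.im : ℝ) := by
    apply Complex.ext <;> simp [Complex.mul_re, Complex.mul_im, hw']
  set yw : ℝ := w.im with hyw
  set a : ℝ := 1 / 2 - Real.arctan yw / π with ha
  have hπ : (0:ℝ) < π := Real.pi_pos
  have h1 := Real.arctan_lt_pi_div_two yw
  have h2 := Real.neg_pi_div_two_lt_arctan yw
  have ha0 : 0 < a := by
    rw [ha, sub_pos, div_lt_iff₀ hπ]
    linarith
  have ha1 : a < 1 := by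
    have h2' : -(1/2 : ℝ) < Real.arctan yw / π := by
      rw [lt_div_iff₀ hπ]; linarith
    rw [ha]; linarith
  have hpa : π * a = π / 2 - Real.arctan yw := by
    rw [ha]; field_simp
  have hacot : myCot a = yw := by
    unfold myCot
    rw [hpa, Real.cos_pi_div_two_sub, Real.sin_pi_div_two_sub,
      ← Real.tan_eq_sin_div_cos, Real.tan_arctan]
  have hsina : Real.sin (π * a) ≠ 0 := by
    refine ne_of_gt (Real.sin_pos_of_pos_of_lt_pi (by positivity) ?_)
    nlinarith
  have hcont : ContinuousAt myCot a := by
    unfold myCot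
    exact ContinuousAt.div
      ((Real.continuous_cos.comp (continuous_const.mul continuous_id)).continuousAt)
      ((Real.continuous_sin.comp (continuous_const.mul continuous_id)).continuousAt) hsina
  rw [Metric.mem_closure_iff]
  intro ε hε
  obtain ⟨δ, hδ0, hδ⟩ := Metric.continuousAt_iff.mp hcont ε hε
  have hUopen : IsOpen (((↑) : ℝ → AddCircle (1:ℝ)) '' Metric.ball a δ) :=
    QuotientAddGroup.isOpenMap_coe _ Metric.isOpen_ball
  have hUne : (((↑) : ℝ → AddCircle (1:ℝ)) '' Metric.ball a δ).Nonempty :=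
    ⟨_, ⟨a, Metric.mem_ball_self hδ0, rfl⟩⟩
  obtain ⟨k, hk⟩ := hx _ hUopen hUne
  obtain ⟨s, hs, hscoe⟩ := hk
  have hdiff : ∃ n : ℤ, s = 2 ^ k * t₀ + n := by
    have hcc : (s : AddCircle (1:ℝ)) = ((2 ^ k * t₀ : ℝ) : AddCircle (1:ℝ)) := by
      rw [hscoe, hθ k]
    rw [QuotientAddGroup.eq] at hcc
    obtain ⟨n, hn⟩ := AddSubgroup.mem_zmultiples_iff.mp hcc
    rw [zsmul_eq_mul, mul_one] at hn
    exact ⟨-n, by push_cast; linarith⟩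
  obtain ⟨n, hn⟩ := hdiff
  have hgs : myCot s = myCot (2 ^ k * t₀) := by
    rw [hn]
    have hper := (myCot_periodic.int_mul n) (2 ^ k * t₀)
    rw [mul_one] at hper
    exact hper
  refine ⟨N^[k] z, ⟨k, rfl⟩, ?_⟩
  have key : dist w (N^[k] z) = |myCot a - myCot s| := by
    rw [hiterN k, hwI, ← hgs, ← hacot, Complex.dist_eq]
    have h3 : Complex.I * ((myCot a : ℝ) : ℂ) - Complex.I * ((myCot s : ℝ) : ℂ)
        = Complex.I * (((myCot a - myCot s : ℝ) : ℝ) : ℂ) := by push_cast; ring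
    rw [h3, norm_mul, Complex.norm_I, one_mul, Complex.norm_real, Real.norm_eq_abs]
  rw [key, abs_sub_comm, ← Real.dist_eq]
  exact hδ (Metric.mem_ball.mp hs)
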